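/- Assume the sample covariance matrix Σ̂ is invertible (so that A_e = (n/(n−1)²)Σ̂ + n θ̂θ̂ᵗ is positive definite). Then over the affine set {λ ∈ ℝ^m : ∑_{i=1}^m λ_i = 1}, the cross-validation discrepancy D_e^{(m)}(λ) = ∑_{j=1}^n (X_{1j} − ∑_{i=1}^m λ_i X̄_i^{(−j)})² attains its unique minimum at λ_e^{opt} = (1,0,…,0)ᵗ − e_n² ( A_e^{−1} Σ̂₁ − ((𝟙ᵗ A_e^{−1} Σ̂₁)/(𝟙ᵗ A_e^{−1} 𝟙)) A_e^{−1} 𝟙 ), where 𝟙 = (1,…,1)ᵗ ∈ ℝ^m and Σ̂₁ is the first column of Σ̂. -/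

import Mathlib

open Matrix

/-- Leave-one-out mean: `(1/(n-1)) ∑_{k ≠ j} Y k`. -/
noncomputable def looMean (n : ℕ) (Y : Fin n → ℝ) (j : Fin n) : ℝ :=
  (1 / ((n : ℝ) - 1)) * ∑ k ∈ Finset.univ.erase j, Y k

/-- Sample mean `(1/n) ∑_j Y j`. -/
noncomputable def sampleMean (n : ℕ) (Y : Fin n → ℝ) : ℝ :=
  (1 / (n : ℝ)) * ∑ j, Y j

/-- Sample covariance `(1/n) ∑_j (Y j − Ȳ)(Z j − Z̄)`. -/
noncomputable def sampleCov (n : ℕ) (Y Z : Fin n → ℝ) : ℝ :=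
  (1 / (n : ℝ)) * ∑ j, (Y j - sampleMean n Y) * (Z j - sampleMean n Z)

/-- The matrix `A_e` with entries `(A_e)_{ik} = ∑_j X̄_i^{(−j)} X̄_k^{(−j)}`. -/
noncomputable def Ae (m n : ℕ) (X : Fin m → Fin n → ℝ) : Matrix (Fin m) (Fin m) ℝ :=
  fun i k => ∑ j : Fin n, looMean n (X i) j * looMean n (X k) j

/-- The sample covariance matrix `Σ̂`. -/
noncomputable def SigmaHat (m n : ℕ) (X : Fin m → Fin n → ℝ) : Matrix (Fin m) (Fin m) ℝ :=
  fun i k => sampleCov n (X i) (X k)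

/-- The cross-validation discrepancy `D_e^{(m)}(λ) = ∑ⱼ (X_{1j} − ∑ᵢ λᵢ X̄ᵢ^{(−j)})²`. -/
noncomputable def De (m n : ℕ) (hm : 0 < m) (X : Fin m → Fin n → ℝ) (l : Fin m → ℝ) : ℝ :=
  ∑ j : Fin n, (X ⟨0, hm⟩ j - ∑ i : Fin m, l i * looMean n (X i) j) ^ 2

/-- The optimum weight vector
`λ_e^{opt} = (1,0,…,0)ᵗ − e_n² ( A_e⁻¹ Σ̂₁ − ((𝟙ᵗ A_e⁻¹ Σ̂₁)/(𝟙ᵗ A_e⁻¹ 𝟙)) A_e⁻¹ 𝟙 )`. -/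
noncomputable def lamOpt (m n : ℕ) (hm : 0 < m) (X : Fin m → Fin n → ℝ) : Fin m → ℝ :=
  (fun i => if i = (⟨0, hm⟩ : Fin m) then (1 : ℝ) else 0)
    - ((n : ℝ) / ((n : ℝ) - 1)) ^ 2 •
        ((Ae m n X)⁻¹ *ᵥ (fun i => SigmaHat m n X i ⟨0, hm⟩)
          - (((fun _ => (1 : ℝ)) ⬝ᵥ ((Ae m n X)⁻¹ *ᵥ (fun i => SigmaHat m n X i ⟨0, hm⟩)))
              / ((fun _ => (1 : ℝ)) ⬝ᵥ ((Ae m n X)⁻¹ *ᵥ (fun _ => (1 : ℝ)))))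
            • ((Ae m n X)⁻¹ *ᵥ (fun _ => (1 : ℝ))))

/-- If `Σ̂` is invertible, then over `{λ : ∑ᵢ λᵢ = 1}` the cross-validation discrepancy
attains its unique minimum at `λ_e^{opt}`. -/

lemma looMean_eq (n : ℕ) (Y : Fin n → ℝ) (j : Fin n) :
    looMean n Y j = (1 / ((n : ℝ) - 1)) * ((∑ k, Y k) - Y j) := by
  rw [looMean, Finset.sum_erase_eq_sub (Finset.mem_univ j)]
lemma sum_shift (n : ℕ) (f g : Fin n → ℝ) (a b : ℝ) :
    ∑ j : Fin n, (a - f j) * (b - g j)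
      = (n : ℝ) * (a * b) - a * (∑ j, g j) - b * (∑ j, f j) + ∑ j, f j * g j := by
  have h : ∀ j : Fin n, (a - f j) * (b - g j) = a * b - a * g j - b * f j + f j * g j :=
    fun j => by ring
  rw [Finset.sum_congr rfl fun j _ => h j]
  rw [Finset.sum_add_distrib, Finset.sum_sub_distrib, Finset.sum_sub_distrib,
    Finset.sum_const, Finset.card_univ, Fintype.card_fin, nsmul_eq_mul]
  simp only [← Finset.mul_sum]

-- quadratic form of a Gram-type matrix
lemma quad_gram (m n : ℕ) (c : ℝ) (w : Fin m → Fin n → ℝ) (u : Fin m → ℝ) :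
    u ⬝ᵥ ((fun i k => c * ∑ j : Fin n, w i j * w k j : Matrix (Fin m) (Fin m) ℝ) *ᵥ u)
      = c * ∑ j : Fin n, (∑ i, u i * w i j) ^ 2 := by
  simp only [mulVec, dotProduct]
  calc ∑ i, u i * ∑ k, (c * ∑ j : Fin n, w i j * w k j) * u k
      = ∑ i, ∑ j : Fin n, ∑ k, c * ((u i * w i j) * (u k * w k j)) := by
        refine Finset.sum_congr rfl fun i _ => ?_
        rw [Finset.mul_sum, Finset.sum_comm]
        refine Finset.sum_congr rfl fun k _ => ?_
        rw [Finset.mul_sum, Finset.sum_mul, Finset.mul_sum]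
        exact Finset.sum_congr rfl fun j _ => by ring
    _ = ∑ j : Fin n, ∑ i, ∑ k, c * ((u i * w i j) * (u k * w k j)) := Finset.sum_comm
    _ = c * ∑ j : Fin n, (∑ i, u i * w i j) ^ 2 := by
        rw [Finset.mul_sum]
        refine Finset.sum_congr rfl fun j _ => ?_
        rw [sq, Finset.sum_mul_sum, Finset.mul_sum]
        exact Finset.sum_congr rfl fun i _ => by
          rw [Finset.mul_sum]
lemma sigma_closed (m n : ℕ) (hn : 2 ≤ n) (X : Fin m → Fin n → ℝ) (i k : Fin m) :
    SigmaHat m n X i k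
      = (1/(n:ℝ)) * (∑ j, X i j * X k j)
        - (1/(n:ℝ))^2 * ((∑ j, X i j) * (∑ j, X k j)) := by
  have hN : (n:ℝ) ≠ 0 := by
    have : (2:ℝ) ≤ (n:ℝ) := by exact_mod_cast hn
    linarith
  show sampleCov n (X i) (X k) = _
  rw [sampleCov]
  have h : ∑ j, (X i j - sampleMean n (X i)) * (X k j - sampleMean n (X k))
      = ∑ j, (sampleMean n (X i) - X i j) * (sampleMean n (X k) - X k j) :=
    Finset.sum_congr rfl fun j _ => by ring
  rw [h, sum_shift, sampleMean, sampleMean]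
  field_simp
  ring
lemma ae_closed (m n : ℕ) (X : Fin m → Fin n → ℝ) (i k : Fin m) :
    Ae m n X i k
      = (1/((n:ℝ)-1))^2 * ((n:ℝ) * ((∑ j, X i j) * (∑ j, X k j))
          - 2 * ((∑ j, X i j) * (∑ j, X k j)) + ∑ j, X i j * X k j) := by
  show ∑ j : Fin n, looMean n (X i) j * looMean n (X k) j = _
  have h : ∑ j : Fin n, looMean n (X i) j * looMean n (X k) j
      = (1/((n:ℝ)-1))^2 * ∑ j, ((∑ t, X i t) - X i j) * ((∑ t, X k t) - X k j) := by
    rw [Finset.mul_sum]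
    exact Finset.sum_congr rfl fun j _ => by rw [looMean_eq, looMean_eq]; ring
  rw [h, sum_shift]
  ring
lemma ae_apply (m n : ℕ) (hn : 2 ≤ n) (X : Fin m → Fin n → ℝ) (i k : Fin m) :
    Ae m n X i k = ((n:ℝ)/((n:ℝ)-1)^2) * SigmaHat m n X i k
      + (n:ℝ) * (sampleMean n (X i) * sampleMean n (X k)) := by
  have hN : (n:ℝ) ≠ 0 := by
    have : (2:ℝ) ≤ (n:ℝ) := by exact_mod_cast hn
    linarith
  have h1 : (n:ℝ) - 1 ≠ 0 := by
    have : (2:ℝ) ≤ (n:ℝ) := by exact_mod_cast hn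
    intro h; linarith
  rw [ae_closed, sigma_closed m n hn, sampleMean, sampleMean]
  field_simp
  ring
lemma b_closed (m n : ℕ) (X : Fin m → Fin n → ℝ) (i z : Fin m) :
    ∑ j, X z j * looMean n (X i) j
      = (1/((n:ℝ)-1)) * ((∑ j, X i j) * (∑ j, X z j) - ∑ j, X i j * X z j) := by
  have h : ∑ j, X z j * looMean n (X i) j
      = (1/((n:ℝ)-1)) * ∑ j, ((∑ t, X i t) * X z j - X i j * X z j) := by
    rw [Finset.mul_sum]
    exact Finset.sum_congr rfl fun j _ => by rw [looMean_eq]; ring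
  rw [h, Finset.sum_sub_distrib, ← Finset.mul_sum]
lemma b_eq (m n : ℕ) (hn : 2 ≤ n) (X : Fin m → Fin n → ℝ) (i z : Fin m) :
    ∑ j, X z j * looMean n (X i) j
      = Ae m n X i z - ((n:ℝ)/((n:ℝ)-1))^2 * SigmaHat m n X i z := by
  have hN : (n:ℝ) ≠ 0 := by
    have : (2:ℝ) ≤ (n:ℝ) := by exact_mod_cast hn
    linarith
  have h1 : (n:ℝ) - 1 ≠ 0 := by
    have : (2:ℝ) ≤ (n:ℝ) := by exact_mod_cast hn
    intro h; linarith
  rw [b_closed, ae_closed, sigma_closed m n hn]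
  field_simp
  ring
lemma sigma_symm (m n : ℕ) (X : Fin m → Fin n → ℝ) (i k : Fin m) :
    SigmaHat m n X k i = SigmaHat m n X i k := by
  show sampleCov n (X k) (X i) = sampleCov n (X i) (X k)
  rw [sampleCov, sampleCov]
  congr 1
  exact Finset.sum_congr rfl fun j _ => mul_comm _ _
lemma sigma_herm (m n : ℕ) (X : Fin m → Fin n → ℝ) : (SigmaHat m n X).IsHermitian := by
  ext i k
  simp only [conjTranspose_apply, star_trivial]
  exact sigma_symm m n X i k
lemma ae_symm (m n : ℕ) (X : Fin m → Fin n → ℝ) (i k : Fin m) :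
    Ae m n X k i = Ae m n X i k := by
  show (∑ j : Fin n, _) = _
  exact Finset.sum_congr rfl fun j _ => mul_comm _ _
lemma ae_herm (m n : ℕ) (X : Fin m → Fin n → ℝ) : (Ae m n X).IsHermitian := by
  ext i k
  simp only [conjTranspose_apply, star_trivial]
  exact ae_symm m n X i k
lemma quadS (m n : ℕ) (X : Fin m → Fin n → ℝ) (u : Fin m → ℝ) :
    u ⬝ᵥ (SigmaHat m n X *ᵥ u)
      = (1/(n:ℝ)) * ∑ j : Fin n, (∑ i, u i * (X i j - sampleMean n (X i))) ^ 2 :=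
  quad_gram m n (1/(n:ℝ)) (fun i j => X i j - sampleMean n (X i)) u
lemma quadA (m n : ℕ) (X : Fin m → Fin n → ℝ) (u : Fin m → ℝ) :
    u ⬝ᵥ (Ae m n X *ᵥ u)
      = ∑ j : Fin n, (∑ i, u i * looMean n (X i) j) ^ 2 := by
  have h : Ae m n X = fun i k => (1:ℝ) * ∑ j : Fin n, looMean n (X i) j * looMean n (X k) j := by
    funext i k; exact (one_mul _).symm
  rw [h, quad_gram, one_mul]
lemma quad_split (m n : ℕ) (hn : 2 ≤ n) (X : Fin m → Fin n → ℝ) (u : Fin m → ℝ) :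
    u ⬝ᵥ (Ae m n X *ᵥ u)
      = ((n:ℝ)/((n:ℝ)-1)^2) * (u ⬝ᵥ (SigmaHat m n X *ᵥ u))
        + (n:ℝ) * (∑ i, u i * sampleMean n (X i)) ^ 2 := by
  simp only [dotProduct, mulVec, dotProduct]
  calc ∑ i, u i * ∑ k, Ae m n X i k * u k
      = ∑ i, ∑ k, (((n:ℝ)/((n:ℝ)-1)^2) * (u i * (SigmaHat m n X i k * u k))
          + (n:ℝ) * ((u i * sampleMean n (X i)) * (u k * sampleMean n (X k)))) := by
        refine Finset.sum_congr rfl fun i _ => ?_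
        rw [Finset.mul_sum]
        refine Finset.sum_congr rfl fun k _ => ?_
        rw [ae_apply m n hn X]
        ring
    _ = _ := by
        simp only [Finset.sum_add_distrib]
        congr 1
        · rw [Finset.mul_sum]
          refine Finset.sum_congr rfl fun i _ => ?_
          rw [Finset.mul_sum, Finset.mul_sum]
        · rw [sq, Finset.sum_mul_sum, Finset.mul_sum]
          exact Finset.sum_congr rfl fun i _ => by rw [Finset.mul_sum]
lemma sigma_pd (m n : ℕ) (hn : 2 ≤ n) (X : Fin m → Fin n → ℝ)
    (hinv : IsUnit (SigmaHat m n X).det) : (SigmaHat m n X).PosDef := by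
  have hpsd : (SigmaHat m n X).PosSemidef := by
    refine .of_dotProduct_mulVec_nonneg (sigma_herm m n X) fun x => ?_
    rw [star_trivial, quadS]
    positivity
  refine .of_dotProduct_mulVec_pos (sigma_herm m n X) fun x hx => ?_
  rw [star_trivial]
  have h0 : 0 ≤ x ⬝ᵥ (SigmaHat m n X *ᵥ x) := by
    have := hpsd.dotProduct_mulVec_nonneg x; rwa [star_trivial] at this
  rcases h0.lt_or_eq with h | h
  · exact h
  · exfalso
    have hz : SigmaHat m n X *ᵥ x = 0 :=
      (hpsd.dotProduct_mulVec_zero_iff x).mp (by rw [star_trivial]; exact h.symm)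
    have h2 : (SigmaHat m n X)⁻¹ *ᵥ (SigmaHat m n X *ᵥ x) = x := by
      rw [mulVec_mulVec, Matrix.nonsing_inv_mul _ hinv, one_mulVec]
    rw [hz, mulVec_zero] at h2
    exact hx h2.symm
lemma ae_pd (m n : ℕ) (hn : 2 ≤ n) (X : Fin m → Fin n → ℝ)
    (hinv : IsUnit (SigmaHat m n X).det) : (Ae m n X).PosDef := by
  have hN2 : (2:ℝ) ≤ (n:ℝ) := by exact_mod_cast hn
  refine .of_dotProduct_mulVec_pos (ae_herm m n X) fun u hu => ?_
  rw [star_trivial, quad_split m n hn]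
  have h1 : 0 < u ⬝ᵥ (SigmaHat m n X *ᵥ u) := by
    have := (sigma_pd m n hn X hinv).dotProduct_mulVec_pos hu; rwa [star_trivial] at this
  have hc : 0 < (n:ℝ)/((n:ℝ)-1)^2 := by
    apply div_pos (by linarith)
    have : (0:ℝ) < (n:ℝ) - 1 := by linarith
    positivity
  have h2 : 0 ≤ (n:ℝ) * (∑ i, u i * sampleMean n (X i)) ^ 2 := by positivity
  nlinarith
lemma quadA_comm (m n : ℕ) (X : Fin m → Fin n → ℝ) (x y : Fin m → ℝ) :
    x ⬝ᵥ (Ae m n X *ᵥ y) = y ⬝ᵥ (Ae m n X *ᵥ x) := by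
  simp only [dotProduct, mulVec]
  calc ∑ i, x i * ∑ k, Ae m n X i k * y k
      = ∑ i, ∑ k, x i * (Ae m n X i k * y k) :=
        Finset.sum_congr rfl fun i _ => Finset.mul_sum _ _ _
    _ = ∑ k, ∑ i, x i * (Ae m n X i k * y k) := Finset.sum_comm
    _ = ∑ k, y k * ∑ i, Ae m n X k i * x i := by
        refine Finset.sum_congr rfl fun k _ => ?_
        rw [Finset.mul_sum]
        exact Finset.sum_congr rfl fun i _ => by rw [ae_symm m n X k i]; ring
lemma De_expand (m n : ℕ) (hm : 0 < m) (X : Fin m → Fin n → ℝ) (l : Fin m → ℝ) :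
    De m n hm X l
      = (∑ j, X ⟨0, hm⟩ j ^ 2)
        - 2 * ∑ i, l i * (∑ j, X ⟨0, hm⟩ j * looMean n (X i) j)
        + l ⬝ᵥ (Ae m n X *ᵥ l) := by
  rw [De, quadA m n X l]
  have h : ∀ j : Fin n,
      (X ⟨0, hm⟩ j - ∑ i, l i * looMean n (X i) j) ^ 2
        = X ⟨0, hm⟩ j ^ 2 - 2 * (X ⟨0, hm⟩ j * ∑ i, l i * looMean n (X i) j)
          + (∑ i, l i * looMean n (X i) j) ^ 2 := fun j => by ring
  rw [Finset.sum_congr rfl fun j _ => h j, Finset.sum_add_distrib, Finset.sum_sub_distrib,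
    ← Finset.mul_sum]
  have hmid : ∑ j, X ⟨0, hm⟩ j * ∑ i, l i * looMean n (X i) j
      = ∑ i, l i * ∑ j, X ⟨0, hm⟩ j * looMean n (X i) j := by
    calc ∑ j, X ⟨0, hm⟩ j * ∑ i, l i * looMean n (X i) j
        = ∑ j, ∑ i, l i * (X ⟨0, hm⟩ j * looMean n (X i) j) := by
          refine Finset.sum_congr rfl fun j _ => ?_
          rw [Finset.mul_sum]
          exact Finset.sum_congr rfl fun i _ => by ring
      _ = ∑ i, ∑ j, l i * (X ⟨0, hm⟩ j * looMean n (X i) j) := Finset.sum_comm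
      _ = ∑ i, l i * ∑ j, X ⟨0, hm⟩ j * looMean n (X i) j := by
          exact Finset.sum_congr rfl fun i _ => (Finset.mul_sum _ _ _).symm
  rw [hmid]

theorem stmt_5 (m n : ℕ) (hm : 0 < m) (hn : 2 ≤ n) (X : Fin m → Fin n → ℝ)
    (hinv : IsUnit (SigmaHat m n X).det) :
    (∑ i : Fin m, lamOpt m n hm X i = 1)
      ∧ ∀ l : Fin m → ℝ, (∑ i : Fin m, l i = 1) →
          De m n hm X (lamOpt m n hm X) ≤ De m n hm X l
          ∧ (De m n hm X l = De m n hm X (lamOpt m n hm X) → l = lamOpt m n hm X) := by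
  have hN2 : (2:ℝ) ≤ (n:ℝ) := by exact_mod_cast hn
  have hpdA : (Ae m n X).PosDef := ae_pd m n hn X hinv
  have hdetA : IsUnit (Ae m n X).det := isUnit_iff_ne_zero.mpr hpdA.det_pos.ne'
  have hAinv : ∀ x : Fin m → ℝ, Ae m n X *ᵥ ((Ae m n X)⁻¹ *ᵥ x) = x := fun x => by
    rw [mulVec_mulVec, Matrix.mul_nonsing_inv _ hdetA, one_mulVec]
  have hones : ((fun _ => (1:ℝ)) : Fin m → ℝ) ≠ 0 := by
    intro h
    have h2 := congrFun h ⟨0, hm⟩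
    norm_num at h2
  set p : Fin m → ℝ := (Ae m n X)⁻¹ *ᵥ (fun i => SigmaHat m n X i ⟨0, hm⟩) with hp
  set q : Fin m → ℝ := (Ae m n X)⁻¹ *ᵥ (fun _ => (1:ℝ)) with hq
  set cc : ℝ := ((fun _ => (1:ℝ)) ⬝ᵥ p) / ((fun _ => (1:ℝ)) ⬝ᵥ q) with hcc
  set en2 : ℝ := ((n:ℝ)/((n:ℝ)-1))^2 with hen2
  have hlam : lamOpt m n hm X
      = (fun i => if i = (⟨0, hm⟩ : Fin m) then (1:ℝ) else 0) - en2 • (p - cc • q) := rfl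
  have hqpos : 0 < (fun _ => (1:ℝ)) ⬝ᵥ q := by
    have h := hpdA.inv.dotProduct_mulVec_pos hones
    rwa [star_trivial] at h
  have hqsum : ((fun _ => (1:ℝ)) : Fin m → ℝ) ⬝ᵥ q = ∑ i, q i := by simp [dotProduct]
  have hpsum : ((fun _ => (1:ℝ)) : Fin m → ℝ) ⬝ᵥ p = ∑ i, p i := by simp [dotProduct]
  have hq0 : (∑ i, q i) ≠ 0 := by rw [← hqsum]; exact hqpos.ne'
  have hcq : cc * ∑ i, q i = ∑ i, p i := by
    rw [hcc, hpsum, hqsum]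
    exact div_mul_cancel₀ _ hq0
  have hsum1 : ∑ i, lamOpt m n hm X i = 1 := by
    rw [hlam]
    have happ : ∀ i, ((fun i => if i = (⟨0, hm⟩ : Fin m) then (1:ℝ) else 0)
        - en2 • (p - cc • q)) i
        = (if i = (⟨0, hm⟩ : Fin m) then (1:ℝ) else 0) - en2 * (p i - cc * q i) := fun i => rfl
    rw [Finset.sum_congr rfl fun i _ => happ i, Finset.sum_sub_distrib, ← Finset.mul_sum,
      Finset.sum_sub_distrib, ← Finset.mul_sum]
    have hite : ∑ i : Fin m, (if i = (⟨0, hm⟩ : Fin m) then (1:ℝ) else 0) = 1 := by simp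
    rw [hite, hcq]
    ring
  refine ⟨hsum1, ?_⟩
  set μ : ℝ := en2 * cc with hμ
  have hAl : Ae m n X *ᵥ lamOpt m n hm X
      = fun i => (∑ j, X ⟨0, hm⟩ j * looMean n (X i) j) + μ := by
    rw [hlam, mulVec_sub, mulVec_smul, mulVec_sub, mulVec_smul, hp, hq, hAinv, hAinv]
    funext i
    simp only [Pi.sub_apply, Pi.smul_apply, smul_eq_mul]
    have he1 : (Ae m n X *ᵥ fun k => if k = (⟨0, hm⟩ : Fin m) then (1:ℝ) else 0) i
        = Ae m n X i ⟨0, hm⟩ := by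
      simp [mulVec, dotProduct, mul_ite, mul_one, mul_zero]
    rw [he1]
    have hbi := b_eq m n hn X i ⟨0, hm⟩
    rw [← hen2] at hbi
    rw [hbi, hμ]
    ring
  have hdotAl : ∀ v : Fin m → ℝ, v ⬝ᵥ (Ae m n X *ᵥ lamOpt m n hm X)
      = (∑ i, v i * (∑ j, X ⟨0, hm⟩ j * looMean n (X i) j)) + μ * ∑ i, v i := by
    intro v
    rw [hAl]
    show ∑ i, v i * ((∑ j, X ⟨0, hm⟩ j * looMean n (X i) j) + μ) = _
    calc ∑ i, v i * ((∑ j, X ⟨0, hm⟩ j * looMean n (X i) j) + μ)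
        = ∑ i, (v i * (∑ j, X ⟨0, hm⟩ j * looMean n (X i) j) + μ * v i) :=
          Finset.sum_congr rfl fun i _ => by ring
      _ = _ := by rw [Finset.sum_add_distrib, ← Finset.mul_sum]
  intro l hl
  have e1 : l ⬝ᵥ (Ae m n X *ᵥ lamOpt m n hm X)
      = (∑ i, l i * (∑ j, X ⟨0, hm⟩ j * looMean n (X i) j)) + μ := by
    rw [hdotAl l, hl, mul_one]
  have e2 : lamOpt m n hm X ⬝ᵥ (Ae m n X *ᵥ lamOpt m n hm X)
      = (∑ i, lamOpt m n hm X i * (∑ j, X ⟨0, hm⟩ j * looMean n (X i) j)) + μ := by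
    rw [hdotAl _, hsum1, mul_one]
  have e3 : (l - lamOpt m n hm X) ⬝ᵥ (Ae m n X *ᵥ (l - lamOpt m n hm X))
      = l ⬝ᵥ (Ae m n X *ᵥ l) - 2 * (l ⬝ᵥ (Ae m n X *ᵥ lamOpt m n hm X))
        + lamOpt m n hm X ⬝ᵥ (Ae m n X *ᵥ lamOpt m n hm X) := by
    rw [mulVec_sub, dotProduct_sub, sub_dotProduct, sub_dotProduct,
      quadA_comm m n X (lamOpt m n hm X) l]
    ring
  have hdiff : De m n hm X l
      = De m n hm X (lamOpt m n hm X)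
        + (l - lamOpt m n hm X) ⬝ᵥ (Ae m n X *ᵥ (l - lamOpt m n hm X)) := by
    rw [De_expand m n hm X l, De_expand m n hm X (lamOpt m n hm X), e3, e1, e2]
    ring
  have hdd : 0 ≤ (l - lamOpt m n hm X) ⬝ᵥ (Ae m n X *ᵥ (l - lamOpt m n hm X)) := by
    rw [quadA]
    positivity
  constructor
  · linarith [hdiff, hdd]
  · intro heq
    have h0 : (l - lamOpt m n hm X) ⬝ᵥ (Ae m n X *ᵥ (l - lamOpt m n hm X)) = 0 := by
      linarith [hdiff, heq]
    by_contra hne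
    have hd0 : l - lamOpt m n hm X ≠ 0 := fun h => hne (sub_eq_zero.mp h)
    have := hpdA.dotProduct_mulVec_pos hd0
    rw [star_trivial, h0] at this
    exact lt_irrefl 0 this
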